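/- Let V, M be n×n matrices with V real symmetric and M Hermitian, and suppose V ≥ M (i.e., V − M is positive semidefinite). Then Tr(V) ≥ Tr(Re M) + ‖Im M‖₁, where Re M and Im M are the entrywise real and imaginary part matrices of M, and ‖·‖₁ is the trace norm. -/

import Mathlib

open ComplexOrder Matrix

lemma psd_diag_re_nonneg {n : ℕ} {A : Matrix (Fin n) (Fin n) ℂ} (hA : A.PosSemidef) (k : Fin n) :
    0 ≤ (A k k).re := by
  have := hA.re_dotProduct_nonneg (Pi.single k 1)
  simpa [dotProduct, mulVec, Pi.single_apply, Finset.sum_ite_eq] using this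

/-- The trace norm of a complex matrix: trace of the positive square root of `MᴴM`. -/
noncomputable def traceNorm {n : ℕ} (M : Matrix (Fin n) (Fin n) ℂ) : ℝ :=
  (((Matrix.posSemidef_conjTranspose_mul_self M).1.eigenvectorUnitary : Matrix (Fin n) (Fin n) ℂ) *
      diagonal (((↑) : ℝ → ℂ) ∘ (√·) ∘ (Matrix.posSemidef_conjTranspose_mul_self M).1.eigenvalues) *
      (star (Matrix.posSemidef_conjTranspose_mul_self M).1.eigenvectorUnitary :
        Matrix (Fin n) (Fin n) ℂ)).trace.re

/-- If `V` is real symmetric, `M` is Hermitian and `V - M` is positive semidefinite,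
then `Tr V ≥ Tr(Re M) + ‖Im M‖₁`. -/
theorem trace_ge_reTrace_add_traceNorm_im (n : ℕ)
    (V M : Matrix (Fin n) (Fin n) ℂ)
    (hVreal : ∀ i j, (V i j).im = 0) (hVsymm : Vᵀ = V)
    (hM : M.IsHermitian) (hVM : (V - M).PosSemidef) :
    (∑ i, (M i i).re) + traceNorm (Matrix.of fun i j => (((M i j).im : ℝ) : ℂ))
      ≤ V.trace.re := by
  classical
  set B : Matrix (Fin n) (Fin n) ℂ := Matrix.of fun i j => (((M i j).im : ℝ) : ℂ) with hBdef
  have hMstar : ∀ i j, star (M j i) = M i j := fun i j => congrFun (congrFun hM i) j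
  have hMim : ∀ i j, (M j i).im = -(M i j).im := by
    intro i j
    rw [← hMstar i j]
    simp [Complex.star_def]
  set C : Matrix (Fin n) (Fin n) ℂ := Complex.I • B with hCdef
  have hCherm : C.IsHermitian := by
    ext i j
    simp only [hCdef, hBdef, conjTranspose_apply, Matrix.smul_apply, of_apply, smul_eq_mul,
      star_mul', Complex.star_def, Complex.conj_I, Complex.conj_ofReal]
    rw [hMim i j]
    push_cast
    ring
  have hC2 : Cᴴ * C = Bᴴ * B := by
    rw [hCdef, conjTranspose_smul, smul_mul_assoc, mul_smul_comm, smul_smul]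
    simp [Complex.star_def, Complex.conj_I]
  set U : Matrix (Fin n) (Fin n) ℂ := (hCherm.eigenvectorUnitary : Matrix (Fin n) (Fin n) ℂ) with hUdef
  set eig : Fin n → ℝ := hCherm.eigenvalues with heig
  have hUsU : star U * U = 1 := ((Unitary.mem_iff).mp (hCherm.eigenvectorUnitary).2).1
  have hUUs : U * star U = 1 := ((Unitary.mem_iff).mp (hCherm.eigenvectorUnitary).2).2
  have hdiag : star U * C * U = diagonal (fun i => ((eig i : ℝ) : ℂ)) :=
    by
      have := hCherm.conjStarAlgAut_star_eigenvectorUnitary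
      rw [Unitary.conjStarAlgAut_star_apply] at this
      exact this
  set D : Matrix (Fin n) (Fin n) ℂ := diagonal (fun i => ((|eig i| : ℝ) : ℂ)) with hDdef
  set S : Matrix (Fin n) (Fin n) ℂ := U * D * star U with hSdef
  have hDpsd : D.PosSemidef := by
    rw [hDdef]
    refine posSemidef_diagonal_iff.mpr fun i => ?_
    rw [Complex.zero_le_real]
    exact abs_nonneg _
  have hSpsd : S.PosSemidef := by
    rw [hSdef]
    simpa [star_eq_conjTranspose] using hDpsd.mul_mul_conjTranspose_same U
  have hDD : D * D = diagonal (fun i => ((eig i : ℝ) : ℂ)) * diagonal (fun i => ((eig i : ℝ) : ℂ)) := by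
    rw [hDdef, diagonal_mul_diagonal, diagonal_mul_diagonal]
    refine congrArg diagonal (funext fun i => ?_)
    rw [← Complex.ofReal_mul, ← Complex.ofReal_mul, abs_mul_abs_self]
  have hCspec : C = U * diagonal (fun i => ((eig i : ℝ) : ℂ)) * star U := by
    conv_lhs => rw [hCherm.spectral_theorem]
    rfl
  have assoc : ∀ X : Matrix (Fin n) (Fin n) ℂ,
      (U * X * star U) * (U * X * star U) = U * (X * X) * star U := by
    intro X
    calc (U * X * star U) * (U * X * star U)
        = U * (X * ((star U * U) * (X * star U))) := by simp only [mul_assoc]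
      _ = U * (X * X) * star U := by rw [hUsU, one_mul]; simp only [mul_assoc]
  have hSsq : S ^ 2 = Bᴴ * B := by
    rw [← hC2, hCherm.eq, pow_two, hSdef, hCspec, assoc, assoc, hDD]
  have hsqrtS : ((posSemidef_conjTranspose_mul_self B).1.eigenvectorUnitary : Matrix (Fin n) (Fin n) ℂ) *
      diagonal (((↑) : ℝ → ℂ) ∘ (√·) ∘ (posSemidef_conjTranspose_mul_self B).1.eigenvalues) *
      (star (posSemidef_conjTranspose_mul_self B).1.eigenvectorUnitary :
        Matrix (Fin n) (Fin n) ℂ) = S := by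
    open scoped MatrixOrder in
    have h1 := (posSemidef_conjTranspose_mul_self B).1.cfc_eq Real.sqrt
    open scoped MatrixOrder in
    have h2 : CFC.sqrt (Bᴴ * B) = S :=
      CFC.sqrt_unique (by rw [← pow_two]; exact hSsq) hSpsd.nonneg
    open scoped MatrixOrder in
    rw [← h2, CFC.sqrt_eq_real_sqrt (Bᴴ * B) (posSemidef_conjTranspose_mul_self B).nonneg, cfcₙ_eq_cfc (hf0 := Real.sqrt_zero), h1]
    rfl
  have htn : traceNorm B = ∑ i, |eig i| := by
    rw [traceNorm, hsqrtS, hSdef, trace_mul_cycle, hUsU, one_mul, hDdef, trace_diagonal]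
    simp [Complex.re_sum]
  set W : Matrix (Fin n) (Fin n) ℂ := V - M + C with hWdef
  have hWC1 : (W - C).PosSemidef := by rw [hWdef, add_sub_cancel_right]; exact hVM
  have hWC2 : (W + C).PosSemidef := by
    have h : W + C = (V - M)ᵀ := by
      ext i j
      have hV : V j i = V i j := congrFun (congrFun hVsymm i) j
      simp only [hWdef, hCdef, hBdef, transpose_apply, Matrix.sub_apply, Matrix.add_apply, Matrix.smul_apply,
        of_apply, smul_eq_mul]
      rw [hV, ← hMstar j i]
      apply Complex.ext <;> simp [Complex.star_def] <;> ring
    rw [h]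
    exact hVM.transpose
  have hbound : ∀ k, |eig k| ≤ ((star U * W * U) k k).re := by
    intro k
    have p1 := hWC1.conjTranspose_mul_mul_same U
    have p2 := hWC2.conjTranspose_mul_mul_same U
    rw [← star_eq_conjTranspose] at p1 p2
    have e1 : star U * (W - C) * U = star U * W * U - diagonal (fun i => ((eig i : ℝ) : ℂ)) := by
      rw [← hdiag, Matrix.mul_sub, Matrix.sub_mul]
    have e2 : star U * (W + C) * U = star U * W * U + diagonal (fun i => ((eig i : ℝ) : ℂ)) := by
      rw [← hdiag, Matrix.mul_add, Matrix.add_mul]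
    rw [e1] at p1; rw [e2] at p2
    have h1 := psd_diag_re_nonneg p1 k
    have h2 := psd_diag_re_nonneg p2 k
    simp only [Matrix.sub_apply, Matrix.add_apply, diagonal_apply_eq, Complex.sub_re, Complex.add_re,
      Complex.ofReal_re] at h1 h2
    rw [abs_le]
    constructor <;> linarith
  have htr : ∑ k, ((star U * W * U) k k).re = W.trace.re := by
    have h : (star U * W * U).trace = W.trace := by
      rw [trace_mul_cycle, hUUs, one_mul]
    rw [← h, Matrix.trace, Complex.re_sum]
    rfl
  have hWtr : W.trace.re = V.trace.re - ∑ i, (M i i).re := by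
    rw [hWdef, trace_add, trace_sub, Complex.add_re, Complex.sub_re]
    have hCtr : ∀ i, (C i i).re = 0 := fun i => by
      simp [hCdef, hBdef, Complex.mul_re]
    simp [Matrix.trace, Complex.re_sum, Matrix.diag, hCtr]
  have hsum : ∑ k, |eig k| ≤ W.trace.re := htr ▸ Finset.sum_le_sum fun k _ => hbound k
  rw [htn]
  linarith
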